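/- Let $F$ be a finite extension of $\mathbf{Q}_p$ with ring of integers $o_F$, Lubin--Tate formal group $\operatorname{LT}$, and for $f \in o_F[[X]]$ let $c_{f,n} \in \operatorname{Int}$ be defined by $f([a](X)) = \sum_n c_{f,n}(a)X^n$. For a subset $M \subseteq o_F[[X]]$ let $\operatorname{Pol}(M)$ be the $o_F$-span of all $c_{f,n}$ with $f \in M$. If $M \in \{o_F[[X]], o_F[[X]]^{\psi=0}\}$ and $b \in o_F^\times$, then $\operatorname{Pol}(M)$ is stable under the substitution $P(T) \mapsto P(bT)$. -/

import Mathlib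

set_option synthInstance.maxHeartbeats 1000000
set_option maxHeartbeats 1000000

open PowerSeries Finset


open PowerSeries

/-- Composition `f(g(X))` of formal power series (valid when `g` has zero constant term):
the coefficient of `X^m` in `∑ n, f_n g(X)^n` only involves `n ≤ m`. -/
noncomputable def PSComp {R : Type*} [CommRing R] (f g : PowerSeries R) : PowerSeries R :=
  PowerSeries.mk fun m => ∑ n ∈ Finset.range (m + 1),
    PowerSeries.coeff (R := R) m (PowerSeries.C (R := R) (PowerSeries.coeff (R := R) n f) * g ^ n)

/-- Evaluation `A(u,v)` of a two-variable power series `A ∈ R[[X,Y]] = (R[[X]])[[Y]]`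
at `u, v` with zero constant term. -/
noncomputable def PSEval2 {R : Type*} [CommRing R] (A : PowerSeries (PowerSeries R))
    (u v : PowerSeries R) : PowerSeries R :=
  PowerSeries.mk fun m => ∑ j ∈ Finset.range (m + 1),
    PowerSeries.coeff (R := R) m (PSComp (PowerSeries.coeff (R := PowerSeries R) j A) u * v ^ j)

/-- A Lubin--Tate formal group over `O` attached to the uniformizer `π`, with residue
cardinality `q`: the addition law `add ∈ O[[X,Y]]`, the endomorphisms `[a](X)` for
`a ∈ O`, normalized so that `[a](X) = aX + O(X^2)`, compatible with the ring structure
of `O`, and such that `[π](X) ≡ X^q mod π`. -/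
structure LubinTate (O : Type*) [CommRing O] (π : O) (q : ℕ) where
  add : PowerSeries (PowerSeries O)
  endo : O → PowerSeries O
  endo_const : ∀ a, PowerSeries.constantCoeff (R := O) (endo a) = 0
  endo_lin : ∀ a, PowerSeries.coeff (R := O) 1 (endo a) = a
  endo_one : endo 1 = PowerSeries.X
  endo_mul : ∀ a b, endo (a * b) = PSComp (endo a) (endo b)
  endo_add : ∀ a b, endo (a + b) = PSEval2 add (endo a) (endo b)
  add_X_zero : PSEval2 add PowerSeries.X 0 = PowerSeries.X
  add_zero_X : PSEval2 add 0 PowerSeries.X = PowerSeries.X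
  endo_pi_frob : ∀ n : ℕ,
    PowerSeries.coeff (R := O) n (endo π) - (if n = q then 1 else 0) ∈ Ideal.span {π}

section Basic
variable {A B : Type*} [CommRing A] [CommRing B]

lemma coeff_PSComp (f g : PowerSeries A) (m : ℕ) :
    coeff (R := A) m (PSComp f g) = ∑ n ∈ Finset.range (m+1), coeff (R := A) n f * coeff (R := A) m (g ^ n) := by
  rw [PSComp, coeff_mk]
  exact Finset.sum_congr rfl fun n _ => coeff_C_mul _ _ _

lemma PSComp_congr {f f' : PowerSeries A} (g : PowerSeries A) (m : ℕ)
    (h : ∀ n, n ≤ m → coeff (R := A) n f = coeff (R := A) n f') :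
    coeff (R := A) m (PSComp f g) = coeff (R := A) m (PSComp f' g) := by
  rw [coeff_PSComp, coeff_PSComp]
  exact Finset.sum_congr rfl fun n hn => by
    rw [h n (Nat.lt_succ_iff.mp (Finset.mem_range.mp hn))]

lemma coeff_pow_eq_zero {g : PowerSeries A} (hg : constantCoeff (R := A) g = 0) {m n : ℕ} (h : m < n) :
    coeff (R := A) m (g ^ n) = 0 := by
  obtain ⟨w, hw⟩ := pow_dvd_pow_of_dvd (PowerSeries.X_dvd_iff.mpr hg) n
  rw [hw, coeff_X_pow_mul', if_neg (by omega)]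

/-- `PSComp · g` as a linear map. -/
noncomputable def PSCompₗ (g : PowerSeries A) : PowerSeries A →ₗ[A] PowerSeries A where
  toFun f := PSComp f g
  map_add' f f' := by
    ext m; rw [coeff_PSComp, map_add, coeff_PSComp, coeff_PSComp, ← Finset.sum_add_distrib]
    exact Finset.sum_congr rfl fun n _ => by rw [map_add, add_mul]
  map_smul' a f := by
    ext m
    rw [RingHom.id_apply, coeff_PSComp, PowerSeries.coeff_smul, coeff_PSComp, smul_eq_mul,
      Finset.mul_sum]
    exact Finset.sum_congr rfl fun n _ => by rw [PowerSeries.coeff_smul, smul_eq_mul, mul_assoc]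

lemma PSComp_add (f f' g : PowerSeries A) :
    PSComp (f + f') g = PSComp f g + PSComp f' g := map_add (PSCompₗ g) f f'

lemma PSComp_zero (g : PowerSeries A) : PSComp 0 g = 0 := map_zero (PSCompₗ g)

lemma PSComp_sub (f f' g : PowerSeries A) :
    PSComp (f - f') g = PSComp f g - PSComp f' g := map_sub (PSCompₗ g) f f'

lemma PSComp_sum {ι : Type*} (s : Finset ι) (t : ι → PowerSeries A) (g : PowerSeries A) :
    PSComp (∑ i ∈ s, t i) g = ∑ i ∈ s, PSComp (t i) g := map_sum (PSCompₗ g) t s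

lemma PSComp_C (a : A) (g : PowerSeries A) : PSComp (C (R := A) a) g = C (R := A) a := by
  ext m
  rw [coeff_PSComp, Finset.sum_eq_single 0]
  · simp [PowerSeries.coeff_C]
  · intro n _ hn; simp [PowerSeries.coeff_C, hn]
  · intro h0; exact absurd (Finset.mem_range.mpr (Nat.succ_pos m)) h0

lemma PSComp_one (g : PowerSeries A) : PSComp 1 g = 1 := by
  simpa using PSComp_C (1 : A) g

lemma PSComp_C_mul (a : A) (f g : PowerSeries A) :
    PSComp (C (R := A) a * f) g = C (R := A) a * PSComp f g := by
  ext m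
  rw [coeff_PSComp, coeff_C_mul, coeff_PSComp, Finset.mul_sum]
  exact Finset.sum_congr rfl fun n _ => by rw [coeff_C_mul, mul_assoc]

lemma constantCoeff_PSComp (f g : PowerSeries A) :
    constantCoeff (R := A) (PSComp f g) = constantCoeff (R := A) f := by
  rw [← coeff_zero_eq_constantCoeff_apply, ← coeff_zero_eq_constantCoeff_apply, coeff_PSComp]
  simp

end Basic

section Eval
variable {A B : Type*} [CommRing A] [CommRing B]

lemma coeff_eval₂ {g : PowerSeries A} (hg : constantCoeff (R := A) g = 0) (P : Polynomial A) (m : ℕ) :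
    coeff (R := A) m (Polynomial.eval₂ (C (R := A)) g P) =
      ∑ n ∈ Finset.range (m+1), P.coeff n * coeff (R := A) m (g ^ n) := by
  rw [Polynomial.eval₂_eq_sum_range' (C (R := A)) (Nat.lt_succ_self P.natDegree) g, map_sum]
  simp_rw [coeff_C_mul]
  set T := fun n => P.coeff n * coeff (R := A) m (g ^ n) with hT
  have h1 : ∑ n ∈ range (P.natDegree + 1), T n
      = ∑ n ∈ range (max (P.natDegree + 1) (m+1)), T n := by
    apply Finset.sum_subset (Finset.range_subset_range.mpr (le_max_left _ _))
    intro n _ hn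
    have : P.natDegree + 1 ≤ n := by simpa using hn
    simp [hT, Polynomial.coeff_eq_zero_of_natDegree_lt (by omega : P.natDegree < n)]
  have h2 : ∑ n ∈ range (m + 1), T n
      = ∑ n ∈ range (max (P.natDegree + 1) (m+1)), T n := by
    apply Finset.sum_subset (Finset.range_subset_range.mpr (le_max_right _ _))
    intro n _ hn
    have : m + 1 ≤ n := by simpa using hn
    simp [hT, coeff_pow_eq_zero hg (by omega : m < n)]
  rw [h1, ← h2]

lemma coeff_PSComp_trunc {g : PowerSeries A} (hg : constantCoeff (R := A) g = 0) (f : PowerSeries A)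
    {m N : ℕ} (hmN : m < N) :
    coeff (R := A) m (PSComp f g) = coeff (R := A) m (Polynomial.eval₂ (C (R := A)) g (trunc N f)) := by
  rw [coeff_eval₂ hg, coeff_PSComp]
  refine Finset.sum_congr rfl fun n hn => ?_
  rw [PowerSeries.coeff_trunc, if_pos]
  have := Finset.mem_range.mp hn; omega

lemma monomial_eq_C_mul_X_pow (a : A) (n : ℕ) :
    (PowerSeries.monomial (R := A) n) a = C (R := A) a * X ^ n := by
  ext k
  simp [PowerSeries.coeff_monomial, coeff_C_mul, PowerSeries.coeff_X_pow, mul_comm]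

lemma PSComp_coe {g : PowerSeries A} (hg : constantCoeff (R := A) g = 0) (P : Polynomial A) :
    PSComp (↑P : PowerSeries A) g = Polynomial.eval₂ (C (R := A)) g P := by
  ext m
  have hm : m < max (m+1) (P.natDegree+1) :=
    lt_of_lt_of_le (Nat.lt_succ_self m) (le_max_left _ _)
  rw [coeff_PSComp_trunc hg (↑P) hm,
    trunc_coe_eq_self (lt_of_lt_of_le (Nat.lt_succ_self _) (le_max_right _ _))]

lemma PSComp_mul {g : PowerSeries A} (hg : constantCoeff (R := A) g = 0) (u v : PowerSeries A) :
    PSComp (u * v) g = PSComp u g * PSComp v g := by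
  ext m
  rw [coeff_PSComp_trunc hg (u*v) (Nat.lt_succ_self m), PowerSeries.coeff_mul]
  have hcalc : ∀ pr ∈ Finset.HasAntidiagonal.antidiagonal m,
      coeff (R := A) pr.1 (PSComp u g) * coeff (R := A) pr.2 (PSComp v g)
      = coeff (R := A) pr.1 (Polynomial.eval₂ (C (R := A)) g (trunc (m+1) u)) *
        coeff (R := A) pr.2 (Polynomial.eval₂ (C (R := A)) g (trunc (m+1) v)) := by
    intro pr hpr
    have hm := Finset.HasAntidiagonal.mem_antidiagonal.mp hpr
    rw [coeff_PSComp_trunc hg u (N := m+1) (by omega),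
      coeff_PSComp_trunc hg v (N := m+1) (by omega)]
  rw [Finset.sum_congr rfl hcalc, ← PowerSeries.coeff_mul, ← Polynomial.eval₂_mul]
  rw [coeff_eval₂ hg, coeff_eval₂ hg]
  refine Finset.sum_congr rfl fun n hn => ?_
  have hnm : n ≤ m := Nat.lt_succ_iff.mp (Finset.mem_range.mp hn)
  congr 1
  rw [PowerSeries.coeff_trunc, if_pos (by omega), Polynomial.coeff_mul, PowerSeries.coeff_mul]
  refine Finset.sum_congr rfl fun pr hpr => ?_
  have hpr' := Finset.HasAntidiagonal.mem_antidiagonal.mp hpr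
  rw [PowerSeries.coeff_trunc, PowerSeries.coeff_trunc, if_pos (by omega), if_pos (by omega)]

lemma PSComp_X {g : PowerSeries A} (hg : constantCoeff (R := A) g = 0) :
    PSComp (X : PowerSeries A) g = g := by
  ext m
  rw [coeff_PSComp]
  simp_rw [PowerSeries.coeff_X, ite_mul, one_mul, zero_mul]
  rw [Finset.sum_ite_eq' (range (m+1)) 1 (fun n => coeff (R := A) m (g ^ n))]
  rcases Nat.eq_zero_or_pos m with rfl|hm
  · rw [if_neg (by simp)]
    rw [← coeff_zero_eq_constantCoeff_apply] at hg
    exact hg.symm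
  · rw [if_pos (Finset.mem_range.mpr (by omega)), pow_one]

lemma PSComp_X_right (f : PowerSeries A) : PSComp f X = f := by
  ext m
  rw [coeff_PSComp]
  simp_rw [PowerSeries.coeff_X_pow, mul_ite, mul_one, mul_zero]
  rw [Finset.sum_ite_eq (range (m+1)) m (fun n => coeff (R := A) n f),
    if_pos (Finset.self_mem_range_succ m)]

/-- `PSComp · g` as a ring hom, when `g` has zero constant coefficient. -/
noncomputable def PSCompRH (g : PowerSeries A) (hg : constantCoeff (R := A) g = 0) :
    PowerSeries A →+* PowerSeries A where
  toFun f := PSComp f g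
  map_one' := PSComp_one g
  map_mul' := PSComp_mul hg
  map_zero' := PSComp_zero g
  map_add' f f' := PSComp_add f f' g

lemma PSComp_pow {g : PowerSeries A} (hg : constantCoeff (R := A) g = 0) (f : PowerSeries A) (n : ℕ) :
    PSComp (f ^ n) g = (PSComp f g) ^ n := map_pow (PSCompRH g hg) f n

lemma PSComp_X_pow {g : PowerSeries A} (hg : constantCoeff (R := A) g = 0) (n : ℕ) :
    PSComp ((X : PowerSeries A) ^ n) g = g ^ n := by
  rw [PSComp_pow hg, PSComp_X hg]

lemma PSComp_assoc {g h : PowerSeries A} (hg : constantCoeff (R := A) g = 0)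
    (hh : constantCoeff (R := A) h = 0) (f : PowerSeries A) :
    PSComp (PSComp f g) h = PSComp f (PSComp g h) := by
  have hgh : constantCoeff (R := A) (PSComp g h) = 0 := by rw [constantCoeff_PSComp]; exact hg
  have hpoly : ∀ P : Polynomial A,
      PSComp (PSComp (↑P) g) h = PSComp (↑P) (PSComp g h) := by
    intro P
    induction P using Polynomial.induction_on' with
    | add p r hp hr =>
        rw [Polynomial.coe_add, PSComp_add, PSComp_add, hp, hr, PSComp_add]
    | monomial n a =>
        simp only [Polynomial.coe_monomial, _root_.monomial_eq_C_mul_X_pow, PSComp_C_mul,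
          PSComp_X_pow hg, PSComp_X_pow hgh, PSComp_pow hh, PSComp_X hh]
  ext m
  set P := trunc (m+1) f with hP
  have hPf : ∀ n, n ≤ m → coeff (R := A) n f = coeff (R := A) n (↑P : PowerSeries A) := by
    intro n hn
    rw [Polynomial.coeff_coe, hP, PowerSeries.coeff_trunc, if_pos (by omega)]
  calc coeff (R := A) m (PSComp (PSComp f g) h)
      = coeff (R := A) m (PSComp (PSComp (↑P) g) h) :=
        PSComp_congr h m (fun n hn => PSComp_congr g n (fun k hk => hPf k (le_trans hk hn)))
    _ = coeff (R := A) m (PSComp (↑P) (PSComp g h)) := by rw [hpoly P]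
    _ = coeff (R := A) m (PSComp f (PSComp g h)) := (PSComp_congr _ m hPf).symm

lemma map_PSComp (ρ : A →+* B) (f g : PowerSeries A) :
    PowerSeries.map ρ (PSComp f g) = PSComp (PowerSeries.map ρ f) (PowerSeries.map ρ g) := by
  ext m
  rw [PowerSeries.coeff_map, coeff_PSComp, coeff_PSComp, map_sum]
  refine Finset.sum_congr rfl fun n _ => ?_
  rw [map_mul, PowerSeries.coeff_map, ← map_pow (PowerSeries.map ρ) g n, PowerSeries.coeff_map]

end Eval

section Uniq
variable {B : Type*} [CommRing B]

lemma coeff_PSComp_X_pow_self {q : ℕ} (hq : q ≠ 0) (w : PowerSeries B) (t : ℕ) :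
    coeff (R := B) (q * t) (PSComp w ((X : PowerSeries B) ^ q)) = coeff (R := B) t w := by
  rw [coeff_PSComp]
  simp_rw [← pow_mul, PowerSeries.coeff_X_pow, mul_ite, mul_one, mul_zero]
  have hcong : ∀ n ∈ range (q*t+1),
      (if q * t = q * n then coeff (R := B) n w else 0) = (if n = t then coeff (R := B) n w else 0) := by
    intro n _
    congr 1
    simp only [eq_iff_iff]
    constructor
    · intro h; exact (Nat.eq_of_mul_eq_mul_left (Nat.pos_of_ne_zero hq) h).symm
    · intro h; rw [h]
  rw [Finset.sum_congr rfl hcong, Finset.sum_ite_eq' (range (q*t+1)) t (fun n => coeff (R := B) n w),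
    if_pos (Finset.mem_range.mpr (by
      have := Nat.le_mul_of_pos_left t (Nat.pos_of_ne_zero hq); omega))]

lemma coeff_PSComp_X_pow_ndvd {q m : ℕ} (hdvd : ¬ q ∣ m) (w : PowerSeries B) :
    coeff (R := B) m (PSComp w ((X : PowerSeries B) ^ q)) = 0 := by
  rw [coeff_PSComp]
  simp_rw [← pow_mul, PowerSeries.coeff_X_pow, mul_ite, mul_one, mul_zero]
  apply Finset.sum_eq_zero
  intro n _
  rw [if_neg]
  intro hEq
  exact hdvd ⟨n, hEq⟩

end Uniq

section UniqMain
variable {A : Type*} [CommRing A] [IsDomain A]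

lemma uniq_lemma {q : ℕ} (hq : q ≠ 0) (π : A) (hπ : π ≠ 0)
    (hKrull : (⨅ n : ℕ, (Ideal.span {π} : Ideal A) ^ n) = ⊥)
    (Eπ : PowerSeries A)
    (hfrob : ∀ n : ℕ, coeff (R := A) n Eπ - (if n = q then 1 else 0) ∈ Ideal.span {π}) :
    ∀ h : Fin q → PowerSeries A,
      (∑ i : Fin q, X ^ (i : ℕ) * PSComp (h i) Eπ) = 0 → ∀ i, h i = 0 := by
  classical
  set I : Ideal A := Ideal.span {π} with hI
  have hCπ : (C (R := A) π) ≠ 0 := fun hC => hπ (by simpa using congrArg (constantCoeff (R := A)) hC)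
  let ρ : A →+* A ⧸ I := Ideal.Quotient.mk I
  have hmapEπ : PowerSeries.map ρ Eπ = (X : PowerSeries (A ⧸ I)) ^ q := by
    ext n
    rw [PowerSeries.coeff_map, PowerSeries.coeff_X_pow]
    have h0 : ρ (coeff (R := A) n Eπ - (if n = q then 1 else 0)) = 0 :=
      Ideal.Quotient.eq_zero_iff_mem.mpr (hfrob n)
    rw [map_sub] at h0
    rw [sub_eq_zero.mp h0]
    split <;> simp
  have step : ∀ h : Fin q → PowerSeries A, (∑ i : Fin q, X ^ (i:ℕ) * PSComp (h i) Eπ) = 0 →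
      ∃ h' : Fin q → PowerSeries A, (∀ i, h i = C (R := A) π * h' i) ∧
        (∑ i : Fin q, X ^ (i:ℕ) * PSComp (h' i) Eπ) = 0 := by
    intro h hh
    have hz : (∑ i : Fin q, (X : PowerSeries (A ⧸ I)) ^ (i:ℕ) *
        PSComp (PowerSeries.map ρ (h i)) ((X : PowerSeries (A ⧸ I)) ^ q)) = 0 := by
      calc (∑ i : Fin q, (X : PowerSeries (A ⧸ I)) ^ (i:ℕ) *
            PSComp (PowerSeries.map ρ (h i)) ((X : PowerSeries (A ⧸ I)) ^ q))
          = PowerSeries.map ρ (∑ i : Fin q, X ^ (i:ℕ) * PSComp (h i) Eπ) := by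
            rw [map_sum]
            exact (Finset.sum_congr rfl fun i _ => by
              rw [map_mul, map_pow, PowerSeries.map_X, map_PSComp, hmapEπ]).symm
        _ = 0 := by rw [hh, map_zero]
    have hmod : ∀ i, PowerSeries.map ρ (h i) = 0 := by
      intro i₀
      ext t
      have hc := congrArg (coeff (R := A ⧸ I) ((i₀ : ℕ) + q * t)) hz
      rw [map_sum, map_zero] at hc
      rw [Finset.sum_eq_single i₀] at hc
      · rw [coeff_X_pow_mul', if_pos (by omega),
          show (i₀:ℕ) + q*t - (i₀:ℕ) = q*t by omega, coeff_PSComp_X_pow_self hq] at hc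
        rw [map_zero]
        exact hc
      · intro i _ hne
        rw [coeff_X_pow_mul']
        split
        case isTrue hle =>
          apply coeff_PSComp_X_pow_ndvd
          rintro ⟨s, hs⟩
          have hsum : (i₀ : ℕ) + q * t = q * s + (i : ℕ) := by omega
          have hi : (i : ℕ) < q := i.isLt
          have hi₀ : (i₀ : ℕ) < q := i₀.isLt
          have hne' : (i : ℕ) ≠ (i₀ : ℕ) := fun hc' => hne (Fin.ext hc')
          rcases lt_trichotomy s t with h'|h'|h'
          · have : q * (s+1) ≤ q * t := Nat.mul_le_mul_left q h'
            rw [Nat.mul_add, Nat.mul_one] at this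
            omega
          · subst h'; omega
          · have : q * (t+1) ≤ q * s := Nat.mul_le_mul_left q h'
            rw [Nat.mul_add, Nat.mul_one] at this
            omega
        case isFalse => rfl
      · intro hmem; exact absurd (Finset.mem_univ i₀) hmem
    have hdvd : ∀ (i : Fin q) (m : ℕ), π ∣ coeff (R := A) m (h i) := by
      intro i m
      have hρ0 : ρ (coeff (R := A) m (h i)) = 0 := by
        have := congrArg (coeff (R := A ⧸ I) m) (hmod i)
        rwa [PowerSeries.coeff_map, map_zero] at this
      exact Ideal.mem_span_singleton.mp (hI ▸ Ideal.Quotient.eq_zero_iff_mem.mp hρ0)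
    choose c hc using hdvd
    have hfac : ∀ i : Fin q, h i = C (R := A) π * PowerSeries.mk (c i) := fun i =>
      PowerSeries.ext fun m => by rw [coeff_C_mul, coeff_mk]; exact hc i m
    refine ⟨fun i => PowerSeries.mk (c i), hfac, ?_⟩
    have hexp : (0 : PowerSeries A)
        = C (R := A) π * (∑ i : Fin q, X ^ (i:ℕ) * PSComp (PowerSeries.mk (c i)) Eπ) := by
      rw [← hh, Finset.mul_sum]
      exact Finset.sum_congr rfl fun i _ => by
        rw [hfac i, PSComp_C_mul]; ring
    rcases mul_eq_zero.mp hexp.symm with h'|h'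
    · exact absurd h' hCπ
    · exact h'
  have main : ∀ (n : ℕ) (h : Fin q → PowerSeries A),
      (∑ i : Fin q, X ^ (i:ℕ) * PSComp (h i) Eπ) = 0 → ∀ i m, coeff (R := A) m (h i) ∈ I ^ n := by
    intro n
    induction n with
    | zero => intro h _ i m; rw [pow_zero, Ideal.one_eq_top]; exact Submodule.mem_top
    | succ n ih =>
      intro h hh i m
      obtain ⟨h', hfac, hh'⟩ := step h hh
      rw [hfac i, coeff_C_mul, pow_succ']
      exact Ideal.mul_mem_mul (Ideal.mem_span_singleton_self π) (ih h' hh' i m)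
  intro h hh i
  ext m
  have hm : coeff (R := A) m (h i) ∈ (⨅ n : ℕ, I ^ n) :=
    (Submodule.mem_iInf _).mpr (fun n => main n h hh i m)
  rw [hKrull] at hm
  simpa using hm

end UniqMain

section Key
variable {A : Type*} [CommRing A] [IsDomain A]

lemma key_psi {q : ℕ} (π : A) (hπ : π ≠ 0)
    (E : A → PowerSeries A)
    (hEc : ∀ a, constantCoeff (R := A) (E a) = 0)
    (hE1 : E 1 = X)
    (hEm : ∀ a c, E (a * c) = PSComp (E a) (E c))
    (D : PowerSeries A → Fin q → PowerSeries A)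
    (hD : ∀ f, f = ∑ i : Fin q, X ^ (i : ℕ) * PSComp (D f i) (E π))
    (hU : ∀ g g' : Fin q → PowerSeries A,
      (∑ i : Fin q, X ^ (i : ℕ) * PSComp (g i) (E π)) =
      (∑ i : Fin q, X ^ (i : ℕ) * PSComp (g' i) (E π)) → g = g')
    (ψ : PowerSeries A → PowerSeries A)
    (hψ : ∀ f, C (R := A) π * ψ f = ∑ i : Fin q, D (X ^ (i : ℕ) * f) i)
    (b b' : A) (hbb' : b * b' = 1)
    (f : PowerSeries A) (hf : ψ f = 0) : ψ (PSComp f (E b)) = 0 := by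
  classical
  have hb'b : b' * b = 1 := by rw [mul_comm]; exact hbb'
  have hCπ : (C (R := A) π) ≠ 0 := fun hC => hπ (by simpa using congrArg (constantCoeff (R := A)) hC)
  -- commutation of composition operators
  have hcomm : ∀ (c : A) (h : PowerSeries A),
      PSComp (PSComp h (E π)) (E c) = PSComp (PSComp h (E c)) (E π) := by
    intro c h
    rw [PSComp_assoc (hEc π) (hEc c), ← hEm, mul_comm, hEm, ← PSComp_assoc (hEc c) (hEc π)]
  have hσσ' : ∀ h : PowerSeries A, PSComp (PSComp h (E b')) (E b) = h := by
    intro h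
    rw [PSComp_assoc (hEc b') (hEc b), ← hEm, hb'b, hE1, PSComp_X_right]
  have hσ'σ : ∀ h : PowerSeries A, PSComp (PSComp h (E b)) (E b') = h := by
    intro h
    rw [PSComp_assoc (hEc b) (hEc b'), ← hEm, hbb', hE1, PSComp_X_right]
  -- the master rearrangement
  have expand2 : ∀ (a : Fin q → Fin q → PowerSeries A) (w : Fin q → PowerSeries A),
      (∑ j : Fin q, (∑ m : Fin q, X ^ (m : ℕ) * PSComp (a m j) (E π)) * PSComp (w j) (E π))
      = ∑ m : Fin q, X ^ (m : ℕ) * PSComp (∑ j : Fin q, a m j * w j) (E π) := by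
    intro a w
    simp_rw [Finset.sum_mul, mul_assoc, ← PSComp_mul (hEc π)]
    rw [Finset.sum_comm]
    exact Finset.sum_congr rfl fun m _ => by rw [PSComp_sum, Finset.mul_sum]
  have expandE : ∀ (c : A) (w : Fin q → PowerSeries A),
      (∑ j : Fin q, (E c) ^ (j : ℕ) * PSComp (w j) (E π))
      = ∑ m : Fin q, X ^ (m : ℕ) *
          PSComp (∑ j : Fin q, D ((E c) ^ (j : ℕ)) m * w j) (E π) := by
    intro c w
    rw [← expand2 (fun m j => D ((E c) ^ (j : ℕ)) m) w]
    exact Finset.sum_congr rfl fun j _ => by rw [← hD ((E c) ^ (j : ℕ))]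
  -- pushing a decomposition through composition with `E c`
  have push : ∀ (c : A) (v : Fin q → PowerSeries A) (s : PowerSeries A),
      s = (∑ j : Fin q, X ^ (j : ℕ) * PSComp (v j) (E π)) →
      PSComp s (E c) = ∑ m : Fin q, X ^ (m : ℕ) *
        PSComp (∑ j : Fin q, D ((E c) ^ (j : ℕ)) m * PSComp (v j) (E c)) (E π) := by
    intro c v s hs
    calc PSComp s (E c)
        = ∑ j : Fin q, PSComp (X ^ (j : ℕ) * PSComp (v j) (E π)) (E c) := by
          rw [hs, PSComp_sum]
      _ = ∑ j : Fin q, (E c) ^ (j : ℕ) * PSComp (PSComp (v j) (E c)) (E π) :=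
          Finset.sum_congr rfl fun j _ => by
            rw [PSComp_mul (hEc c), PSComp_X_pow (hEc c), hcomm c]
      _ = _ := expandE c _
  -- matrices
  let σRH : PowerSeries A →+* PowerSeries A := PSCompRH (E b) (hEc b)
  let Am : PowerSeries A → Matrix (Fin q) (Fin q) (PowerSeries A) :=
    fun g => Matrix.of fun j i => D (X ^ (i : ℕ) * g) j
  let Em : Matrix (Fin q) (Fin q) (PowerSeries A) :=
    Matrix.of fun j i => D ((E b) ^ (i : ℕ)) j
  let E'm : Matrix (Fin q) (Fin q) (PowerSeries A) :=
    Matrix.of fun j i => D ((E b') ^ (i : ℕ)) j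
  -- delta expansion of X^i
  have hXiδ : ∀ i : Fin q, (X : PowerSeries A) ^ (i : ℕ)
      = ∑ m : Fin q, X ^ (m : ℕ) *
          PSComp ((1 : Matrix (Fin q) (Fin q) (PowerSeries A)) m i) (E π) := by
    intro i
    symm
    calc ∑ m : Fin q, X ^ (m : ℕ) *
          PSComp ((1 : Matrix (Fin q) (Fin q) (PowerSeries A)) m i) (E π)
        = ∑ m : Fin q, (if m = i then (X : PowerSeries A) ^ (m : ℕ) else 0) :=
          Finset.sum_congr rfl fun m _ => by
            by_cases h : m = i <;>
              simp [Matrix.one_apply, h, PSComp_one, PSComp_zero]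
      _ = (X : PowerSeries A) ^ (i : ℕ) := by
          rw [Finset.sum_ite_eq' Finset.univ i (fun m => (X : PowerSeries A) ^ (m : ℕ))]
          simp
  -- inverse relations
  have hinv1 : Em * σRH.mapMatrix E'm = 1 := by
    have hfam : ∀ i : Fin q,
        (fun m => ∑ j : Fin q, D ((E b) ^ (j : ℕ)) m * PSComp (D ((E b') ^ (i : ℕ)) j) (E b))
        = (fun m => (1 : Matrix (Fin q) (Fin q) (PowerSeries A)) m i) := by
      intro i
      apply hU
      have h1 := push b (fun j => D ((E b') ^ (i : ℕ)) j) ((E b') ^ (i : ℕ)) (hD _)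
      rw [show PSComp ((E b') ^ (i : ℕ)) (E b) = (X : PowerSeries A) ^ (i : ℕ) from by
        rw [← PSComp_X_pow (hEc b')]; exact hσσ' _] at h1
      rw [← h1, ← hXiδ i]
    apply Matrix.ext; intro m i
    have := congrFun (hfam i) m
    rw [Matrix.mul_apply]
    exact this
  have hinv2 : E'm * (PSCompRH (E b') (hEc b')).mapMatrix Em = 1 := by
    have hfam : ∀ i : Fin q,
        (fun m => ∑ j : Fin q, D ((E b') ^ (j : ℕ)) m * PSComp (D ((E b) ^ (i : ℕ)) j) (E b'))
        = (fun m => (1 : Matrix (Fin q) (Fin q) (PowerSeries A)) m i) := by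
      intro i
      apply hU
      have h1 := push b' (fun j => D ((E b) ^ (i : ℕ)) j) ((E b) ^ (i : ℕ)) (hD _)
      rw [show PSComp ((E b) ^ (i : ℕ)) (E b') = (X : PowerSeries A) ^ (i : ℕ) from by
        rw [← PSComp_X_pow (hEc b)]; exact hσ'σ _] at h1
      rw [← h1, ← hXiδ i]
    apply Matrix.ext; intro m i
    have := congrFun (hfam i) m
    rw [Matrix.mul_apply]
    exact this
  have hGE : σRH.mapMatrix E'm * Em = 1 := by
    have h2 := congrArg (σRH.mapMatrix) hinv2
    rw [map_mul, map_one] at h2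
    have h3 : σRH.mapMatrix ((PSCompRH (E b') (hEc b')).mapMatrix Em) = Em := by
      apply Matrix.ext; intro j i
      simp only [RingHom.mapMatrix_apply, Matrix.map_apply]
      exact hσσ' (Em j i)
    rwa [h3] at h2
  -- main relation : Am (σ f) * Em = Em * σM (Am f)
  have hrel : Am (PSComp f (E b)) * Em = Em * σRH.mapMatrix (Am f) := by
    have hfam : ∀ i : Fin q,
        (fun m => ∑ k : Fin q, D (X ^ (k : ℕ) * PSComp f (E b)) m * D ((E b) ^ (i : ℕ)) k)
        = (fun m => ∑ j : Fin q, D ((E b) ^ (j : ℕ)) m * PSComp (D (X ^ (i : ℕ) * f) j) (E b)) := by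
      intro i
      apply hU
      have way2 := push b (fun j => D (X ^ (i : ℕ) * f) j) (X ^ (i : ℕ) * f) (hD _)
      have way1 : PSComp (X ^ (i : ℕ) * f) (E b)
          = ∑ m : Fin q, X ^ (m : ℕ) *
              PSComp (∑ k : Fin q, D (X ^ (k : ℕ) * PSComp f (E b)) m * D ((E b) ^ (i : ℕ)) k)
                (E π) := by
        calc PSComp (X ^ (i : ℕ) * f) (E b)
            = (E b) ^ (i : ℕ) * PSComp f (E b) := by
              rw [PSComp_mul (hEc b), PSComp_X_pow (hEc b)]
          _ = (∑ k : Fin q, X ^ (k : ℕ) * PSComp (D ((E b) ^ (i : ℕ)) k) (E π)) *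
                PSComp f (E b) := by rw [← hD ((E b) ^ (i : ℕ))]
          _ = ∑ k : Fin q, (X ^ (k : ℕ) * PSComp f (E b)) *
                PSComp (D ((E b) ^ (i : ℕ)) k) (E π) := by
              rw [Finset.sum_mul]
              exact Finset.sum_congr rfl fun k _ => by ring
          _ = ∑ k : Fin q, (∑ m : Fin q, X ^ (m : ℕ) *
                PSComp (D (X ^ (k : ℕ) * PSComp f (E b)) m) (E π)) *
                PSComp (D ((E b) ^ (i : ℕ)) k) (E π) :=
              Finset.sum_congr rfl fun k _ => by
                rw [← hD (X ^ (k : ℕ) * PSComp f (E b))]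
          _ = _ := expand2 _ _
      rw [← way1, way2]
    apply Matrix.ext; intro m i
    rw [Matrix.mul_apply, Matrix.mul_apply]
    have := congrFun (hfam i) m
    exact this
  -- trace computation
  have htrace : Matrix.trace (Am (PSComp f (E b))) = 0 := by
    have h1 : Am (PSComp f (E b)) = Em * (σRH.mapMatrix (Am f) * σRH.mapMatrix E'm) := by
      calc Am (PSComp f (E b))
          = Am (PSComp f (E b)) * (Em * σRH.mapMatrix E'm) := by rw [hinv1, mul_one]
        _ = (Am (PSComp f (E b)) * Em) * σRH.mapMatrix E'm := by rw [mul_assoc]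
        _ = (Em * σRH.mapMatrix (Am f)) * σRH.mapMatrix E'm := by rw [hrel]
        _ = Em * (σRH.mapMatrix (Am f) * σRH.mapMatrix E'm) := by rw [mul_assoc]
    rw [h1, Matrix.trace_mul_comm, mul_assoc, hGE, mul_one]
    have h2 : Matrix.trace (σRH.mapMatrix (Am f)) = σRH (Matrix.trace (Am f)) := by
      simp only [Matrix.trace, Matrix.diag, RingHom.mapMatrix_apply, Matrix.map_apply]
      rw [map_sum]
    have h3 : Matrix.trace (Am f) = C (R := A) π * ψ f := by
      rw [hψ f]
      rfl
    rw [h2, h3, hf, mul_zero, map_zero]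
  have h4 : C (R := A) π * ψ (PSComp f (E b)) = 0 := by
    rw [hψ, ← htrace]
    rfl
  rcases mul_eq_zero.mp h4 with h'|h'
  · exact absurd h' hCπ
  · exact h'

end Key

/-- `Pol(M)` is stable under `P(T) ↦ P(bT)` for units `b`, where `M` is `o_F[[X]]` or
`o_F[[X]]^(ψ=0)` and `Pol(M)` is the `o_F`-span of the coefficient polynomials `c_(f,n)`
for `f ∈ M`. -/
theorem stmt10 (p : ℕ) [Fact p.Prime] (F : Type*) [Field F] [Algebra ℚ_[p] F]
    [FiniteDimensional ℚ_[p] F] [Algebra ℤ_[p] F] [IsScalarTower ℤ_[p] ℚ_[p] F]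
    (O : Subalgebra ℤ_[p] F) (hO : O = integralClosure ℤ_[p] F)
    (π : ↥O) (hπ : Irreducible π) (q : ℕ)
    (hq : Nat.card (↥O ⧸ Ideal.span {π}) = q)
    (LT : LubinTate ↥O π q)
    -- `D f` is the (unique) decomposition of `f` in the basis `1, X, ..., X^(q-1)` of
    -- `↥O⟦X⟧` over `φ(↥O⟦X⟧)`, where `φ(h) = h(LT.endo π)`:
    (D : PowerSeries ↥O → Fin q → PowerSeries ↥O)
    (hD : ∀ f : PowerSeries ↥O,
      f = ∑ i : Fin q, PowerSeries.X ^ (i : ℕ) * PSComp (D f i) (LT.endo π))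
    -- `ψ` is characterized by `φ(ψ(f)) = (1/π)·Tr(f)`, i.e. `π·ψ(f)` is the sum of the
    -- diagonal entries of the matrix of multiplication by `f` in the above basis:
    (ψ : PowerSeries ↥O → PowerSeries ↥O)
    (hψ : ∀ f : PowerSeries ↥O,
      PowerSeries.C (R := ↥O) (π) * ψ f = ∑ i : Fin q, D (PowerSeries.X ^ (i : ℕ) * f) i)
    -- `cpoly f n` is the integer-valued polynomial `c_{f,n} ∈ F[T]` with
    -- `f([a](X)) = ∑ n, c_{f,n}(a) X^n`:
    (cpoly : PowerSeries ↥O → ℕ → Polynomial F)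
    (hcpoly : ∀ (f : PowerSeries ↥O) (n : ℕ) (a : ↥O),
      Polynomial.eval (algebraMap ↥O F a) (cpoly f n) =
        algebraMap ↥O F (PowerSeries.coeff (R := ↥O) n (PSComp f (LT.endo a))))
    (M : Set (PowerSeries ↥O))
    (hM : M = Set.univ ∨ M = {f : PowerSeries ↥O | ψ f = 0})
    (b : ↥O) (hb : IsUnit b) :
    ∀ P ∈ Submodule.span ↥O {c : Polynomial F | ∃ f ∈ M, ∃ n : ℕ, c = cpoly f n},
      P.comp (Polynomial.C (algebraMap ↥O F b) * Polynomial.X) ∈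
        Submodule.span ↥O {c : Polynomial F | ∃ f ∈ M, ∃ n : ℕ, c = cpoly f n} := by
  classical
  subst hO
  haveI : CharZero F := charZero_of_injective_algebraMap (algebraMap ℚ_[p] F).injective
  haveI hNoe : IsNoetherianRing ↥(integralClosure ℤ_[p] F) :=
    integralClosure.isNoetherianRing (A := ℤ_[p]) (K := ℚ_[p]) (L := F)
  have hq0 : q ≠ 0 := by
    intro h0
    subst h0
    have hX := hD PowerSeries.X
    simp only [Finset.univ_eq_empty, Finset.sum_empty] at hX
    have h1 := congrArg (PowerSeries.coeff (R := ↥(integralClosure ℤ_[p] F)) 1) hX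
    rw [map_zero, PowerSeries.coeff_X, if_pos rfl] at h1
    exact one_ne_zero h1
  have hKrull : (⨅ n : ℕ, (Ideal.span {π} : Ideal ↥(integralClosure ℤ_[p] F)) ^ n) = ⊥ :=
    Ideal.iInf_pow_eq_bot_of_isDomain (Ideal.span {π}) (Ideal.span_singleton_ne_top hπ.not_isUnit)
  have hU0 := uniq_lemma hq0 π hπ.ne_zero hKrull (LT.endo π) LT.endo_pi_frob
  have hU : ∀ g g' : Fin q → PowerSeries ↥(integralClosure ℤ_[p] F),
      (∑ i : Fin q, X ^ (i : ℕ) * PSComp (g i) (LT.endo π)) =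
      (∑ i : Fin q, X ^ (i : ℕ) * PSComp (g' i) (LT.endo π)) → g = g' := by
    intro g g' hgg'
    funext i
    have hz : (∑ i : Fin q, X ^ (i : ℕ) * PSComp (g i - g' i) (LT.endo π)) = 0 := by
      simp_rw [PSComp_sub, mul_sub]
      rw [Finset.sum_sub_distrib, hgg', sub_self]
    exact sub_eq_zero.mp (hU0 _ hz i)
  obtain ⟨u, rfl⟩ := hb
  have hMstab : ∀ f ∈ M, PSComp f (LT.endo ↑u) ∈ M := by
    rcases hM with rfl | rfl
    · intro f _; trivial
    · intro f hf
      exact key_psi π hπ.ne_zero LT.endo LT.endo_const LT.endo_one LT.endo_mul D hD hU ψ hψ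
        ↑u ↑u⁻¹ u.mul_inv f hf
  have hC1 : ∀ (f : PowerSeries ↥(integralClosure ℤ_[p] F)) (n : ℕ),
      (cpoly f n).comp (Polynomial.C (algebraMap (↥(integralClosure ℤ_[p] F)) F ↑u) * Polynomial.X)
      = cpoly (PSComp f (LT.endo ↑u)) n := by
    intro f n
    have hev : ∀ a : ↥(integralClosure ℤ_[p] F),
        Polynomial.eval (algebraMap (↥(integralClosure ℤ_[p] F)) F a)
          ((cpoly f n).comp (Polynomial.C (algebraMap (↥(integralClosure ℤ_[p] F)) F ↑u) * Polynomial.X))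
        = Polynomial.eval (algebraMap (↥(integralClosure ℤ_[p] F)) F a) (cpoly (PSComp f (LT.endo ↑u)) n) := by
      intro a
      rw [Polynomial.eval_comp, Polynomial.eval_mul, Polynomial.eval_C, Polynomial.eval_X,
        ← map_mul, hcpoly, hcpoly]
      congr 1
      rw [LT.endo_mul, ← PSComp_assoc (LT.endo_const ↑u) (LT.endo_const a)]
    apply Polynomial.eq_of_infinite_eval_eq
    apply Set.infinite_of_injective_forall_mem (f := fun k : ℕ => (k : F)) Nat.cast_injective
    intro k
    simp only [Set.mem_setOf_eq]
    have := hev ((k : ℕ) : ↥(integralClosure ℤ_[p] F))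
    rwa [map_natCast] at this
  intro P hP
  set S : Set (Polynomial F) := {c | ∃ f ∈ M, ∃ n : ℕ, c = cpoly f n} with hS
  let T : Polynomial F →ₗ[↥(integralClosure ℤ_[p] F)] Polynomial F :=
    { toFun := fun R => R.comp (Polynomial.C (algebraMap (↥(integralClosure ℤ_[p] F)) F ↑u) * Polynomial.X)
      map_add' := fun R₁ R₂ => Polynomial.add_comp
      map_smul' := fun r R => by
        simp only [RingHom.id_apply]
        exact Polynomial.smul_comp r R _ }
  have hTP : T P ∈ Submodule.map T (Submodule.span _ S) := Submodule.mem_map_of_mem hP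
  rw [Submodule.map_span] at hTP
  have hsub : T '' S ⊆
      (Submodule.span ↥(integralClosure ℤ_[p] F) S : Set (Polynomial F)) := by
    rintro x ⟨c, ⟨f, hfM, n, rfl⟩, rfl⟩
    refine Submodule.subset_span ⟨PSComp f (LT.endo ↑u), hMstab f hfM, n, ?_⟩
    simp only [T, LinearMap.coe_mk, AddHom.coe_mk]
    exact hC1 f n
  exact Submodule.span_le.mpr hsub hTP
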